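/- arXiv:1011.1528 — 2 statements merged into one kernel-verified Lean document; each statement's English description precedes it below -/
import Mathlib

section
/- Let K be a commutative ring with unity and A a finite alphabet. For all polynomials P, Q ∈ K⟨A⟩ and every Lie polynomial R ∈ L_K(A), the right and left residuals by R are derivations of the shuffle algebra: (P ⧢ Q) ▷ R = (P ▷ R) ⧢ Q + P ⧢ (Q ▷ R), and R ◁ (P ⧢ Q) = (R ◁ P) ⧢ Q + P ⧢ (R ◁ Q). -/
open scoped BigOperators
open Classical

attribute [local instance 100] LieRing.ofAssociativeRing

noncomputable section

/-- The free associative algebra `K⟨A⟩` on the alphabet `A`, realized as the monoid algebra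
of the free monoid on `A`. -/
abbrev NC (K A : Type*) [CommRing K] : Type _ := MonoidAlgebra K (FreeMonoid A)

variable (K A : Type*) [CommRing K]

/-- The monomial (word) `w` viewed as an element of `K⟨A⟩`. -/
def wp (w : List A) : NC K A := MonoidAlgebra.single (FreeMonoid.ofList w) 1

/-- The coefficient `(P, w)` of the word `w` in the polynomial `P`. -/
def coeffW (P : NC K A) (w : List A) : K := P.coeff (FreeMonoid.ofList w)

/-- The canonical scalar product `(P, Q) = ∑_w (P, w)(Q, w)` on `K⟨A⟩`. -/
def sp (P Q : NC K A) : K := Finsupp.sum P.coeff fun w c => c * Q.coeff w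

/-- The free Lie algebra `L_K(A)`: the Lie subalgebra of `K⟨A⟩` (with the commutator
bracket) generated by the letters. -/
def freeLie : LieSubalgebra K (NC K A) :=
  LieSubalgebra.lieSpan K (NC K A) (Set.range fun a : A => wp K A [a])

/-- The adjoint `λ` of the left-normed Lie bracketing, on words:
`λ(ε) = 0`, `λ(a) = a`, `λ(aub) = λ(au)b − λ(ub)a`. -/
def lam : List A → NC K A
  | [] => 0
  | [a] => wp K A [a]
  | a :: b :: t =>
      lam (a :: (b :: t).dropLast) * wp K A [(b :: t).getLast (by simp)] -
        lam (b :: t) * wp K A [a]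
  termination_by w => w.length
  decreasing_by
    all_goals simp [List.length_dropLast]

/-- `λ` extended linearly to the whole of `K⟨A⟩`. -/
def lamLin : NC K A →ₗ[K] NC K A :=
  (Finsupp.linearCombination K fun w : FreeMonoid A => lam K A (FreeMonoid.toList w)).comp
    (MonoidAlgebra.coeffLinearEquiv K).toLinearMap

/-- The shuffle product of two words, as an element of `K⟨A⟩`. -/
def shuffleW : List A → List A → NC K A
  | [], v => wp K A v
  | u, [] => wp K A u
  | a :: u, b :: v =>
      wp K A [a] * shuffleW u (b :: v) + wp K A [b] * shuffleW (a :: u) v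
  termination_by u v => u.length + v.length
  decreasing_by
    all_goals simp [Nat.lt_succ_iff]

/-- The shuffle product on `K⟨A⟩`, extended bilinearly. -/
def sh (P Q : NC K A) : NC K A :=
  Finsupp.sum P.coeff fun u cu =>
    Finsupp.sum Q.coeff fun v cv =>
      (cu * cv) • shuffleW K A (FreeMonoid.toList u) (FreeMonoid.toList v)

/-- The right residual `P ▷ q` of `P` by a word `q`: `(P ▷ q, w) = (P, qw)`. -/
def rresW (P : NC K A) (q : List A) : NC K A :=
  Finsupp.sum P.coeff fun u c =>
    if q <+: FreeMonoid.toList u then c • wp K A ((FreeMonoid.toList u).drop q.length) else 0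

/-- The right residual `P ▷ Q`: `(P ▷ Q, w) = (P, Qw)`. -/
def rres (P Q : NC K A) : NC K A :=
  Finsupp.sum Q.coeff fun v c => c • rresW K A P (FreeMonoid.toList v)

/-- Auxiliary left residual by a word `q`: `(q ◁ P, w) = (P, wq)`. -/
def lresW (P : NC K A) (q : List A) : NC K A :=
  Finsupp.sum P.coeff fun u c =>
    if q <:+ FreeMonoid.toList u then
      c • wp K A ((FreeMonoid.toList u).take ((FreeMonoid.toList u).length - q.length))
    else 0

/-- The left residual `Q ◁ P`: `(Q ◁ P, w) = (P, wQ)`. -/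
def lres (Q P : NC K A) : NC K A :=
  Finsupp.sum Q.coeff fun v c => c • lresW K A P (FreeMonoid.toList v)

/-- The number of trailing occurrences of the letter `a` in the word `v`. -/
def trailCount (a : A) (v : FreeMonoid A) : ℕ :=
  ((FreeMonoid.toList v).reverse.takeWhile fun x => decide (x = a)).length

/-- `d(P)`: the least number of trailing `a`'s among the words in the support of `P`. -/
def dP (a : A) (P : NC K A) : ℕ :=
  sInf {n : ℕ | ∃ v ∈ Finsupp.support P.coeff, trailCount A a v = n}

/-- `e(P)`: the largest number of trailing `a`'s among the words in the support of `P`. -/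
def eP (a : A) (P : NC K A) : ℕ :=
  Finset.sup (Finsupp.support P.coeff) (trailCount A a)

/-- The polynomial `P_i` in the decomposition `P = ∑ P_i b a^i`: it collects (and strips
the suffix `b a^i` from) the monomials of `P` with exactly `i` trailing `a`'s. -/
def partBA (a b : A) (i : ℕ) (P : NC K A) : NC K A :=
  Finsupp.sum P.coeff fun v c =>
    if (FreeMonoid.toList v).reverse.take (i + 1) = List.replicate i a ++ [b] then
      c • wp K A ((FreeMonoid.toList v).take ((FreeMonoid.toList v).length - (i + 1)))
    else 0

/-- A word is Lyndon if it is nonempty and strictly smaller, in the lexicographic order,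
than each of its proper nonempty right factors. -/
def IsLyndon {A : Type*} [LinearOrder A] (w : List A) : Prop :=
  w ≠ [] ∧ ∀ s t : List A, w = t ++ s → t ≠ [] → s ≠ [] → List.Lex (· < ·) w s

/-- `γ(w)`: the nonnegative generator of the ideal `{(P, w) : P ∈ L_ℤ(A)}` of `ℤ`. -/
def gammaW (A : Type*) (w : List A) : ℤ :=
  haveI : (Ideal.span {c : ℤ | ∃ P ∈ freeLie ℤ A, coeffW ℤ A P w = c}).IsPrincipal :=
    IsPrincipalIdealRing.principal _
  (Submodule.IsPrincipal.generator
    (Ideal.span {c : ℤ | ∃ P ∈ freeLie ℤ A, coeffW ℤ A P w = c})).natAbs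

end
noncomputable section Aux

open Finsupp

variable (K A : Type*) [CommRing K]

/-- helper function for `rresW` as a linear combination -/
def gR (q : List A) (u : FreeMonoid A) : NC K A :=
  if q <+: FreeMonoid.toList u then wp K A ((FreeMonoid.toList u).drop q.length) else 0

def rWL (q : List A) : NC K A →ₗ[K] NC K A := (Finsupp.linearCombination K (gR K A q)).comp (MonoidAlgebra.coeffLinearEquiv K).toLinearMap

lemma coeffLE_single (w : FreeMonoid A) (c : K) :
    (MonoidAlgebra.coeffLinearEquiv K).toLinearMap (MonoidAlgebra.single w c : NC K A) =
      Finsupp.single w c :=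
  rfl

lemma rresW_eq (P : NC K A) (q : List A) : rresW K A P q = rWL K A q P := by
  rw [rresW, rWL, LinearMap.comp_apply]; erw [Finsupp.linearCombination_apply]
  refine Finsupp.sum_congr fun u _ => ?_
  by_cases h : q <+: FreeMonoid.toList u <;> simp [gR, h]

def gL (q : List A) (u : FreeMonoid A) : NC K A :=
  if q <:+ FreeMonoid.toList u then
    wp K A ((FreeMonoid.toList u).take ((FreeMonoid.toList u).length - q.length)) else 0

def lWL (q : List A) : NC K A →ₗ[K] NC K A := (Finsupp.linearCombination K (gL K A q)).comp (MonoidAlgebra.coeffLinearEquiv K).toLinearMap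

lemma lresW_eq (P : NC K A) (q : List A) : lresW K A P q = lWL K A q P := by
  rw [lresW, lWL, LinearMap.comp_apply]; erw [Finsupp.linearCombination_apply]
  refine Finsupp.sum_congr fun u _ => ?_
  by_cases h : q <:+ FreeMonoid.toList u <;> simp [gL, h]

def shWm (u v : FreeMonoid A) : NC K A :=
  shuffleW K A (FreeMonoid.toList u) (FreeMonoid.toList v)

def shL : NC K A →ₗ[K] NC K A →ₗ[K] NC K A :=
  (Finsupp.linearCombination K fun u =>
    (Finsupp.linearCombination K fun v => shWm K A u v).comp (MonoidAlgebra.coeffLinearEquiv K).toLinearMap).comp (MonoidAlgebra.coeffLinearEquiv K).toLinearMap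

lemma sh_eq (P Q : NC K A) : sh K A P Q = shL K A P Q := by
  rw [sh, shL, LinearMap.comp_apply]; erw [Finsupp.linearCombination_apply]
  rw [Finsupp.sum, Finsupp.sum, LinearMap.sum_apply]
  refine Finset.sum_congr rfl fun u _ => ?_
  rw [LinearMap.smul_apply, LinearMap.comp_apply]; erw [Finsupp.linearCombination_apply]
  rw [Finsupp.smul_sum]
  refine Finsupp.sum_congr fun v _ => ?_
  rw [smul_smul, shWm]
  rfl

def DRm : NC K A →ₗ[K] NC K A →ₗ[K] NC K A :=
  (Finsupp.linearCombination K fun v : FreeMonoid A => rWL K A (FreeMonoid.toList v)).comp (MonoidAlgebra.coeffLinearEquiv K).toLinearMap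

lemma rres_eq (P R : NC K A) : rres K A P R = DRm K A R P := by
  rw [rres, DRm, LinearMap.comp_apply]; erw [Finsupp.linearCombination_apply]
  rw [Finsupp.sum, Finsupp.sum, LinearMap.sum_apply]
  refine Finset.sum_congr rfl fun v _ => ?_
  rw [LinearMap.smul_apply, rresW_eq]
  rfl

def ELm : NC K A →ₗ[K] NC K A →ₗ[K] NC K A :=
  (Finsupp.linearCombination K fun v : FreeMonoid A => lWL K A (FreeMonoid.toList v)).comp (MonoidAlgebra.coeffLinearEquiv K).toLinearMap

lemma lres_eq (R P : NC K A) : lres K A R P = ELm K A R P := by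
  rw [lres, ELm, LinearMap.comp_apply]; erw [Finsupp.linearCombination_apply]
  rw [Finsupp.sum, Finsupp.sum, LinearMap.sum_apply]
  refine Finset.sum_congr rfl fun v _ => ?_
  rw [LinearMap.smul_apply, lresW_eq]
  rfl

end Aux
noncomputable section Aux2
variable (K A : Type*) [CommRing K]

lemma wp_toList (u : FreeMonoid A) :
    wp K A (FreeMonoid.toList u) = MonoidAlgebra.single u 1 := by
  rw [wp, FreeMonoid.ofList_toList]

lemma single_eq_smul_wp (u : FreeMonoid A) (c : K) :
    (MonoidAlgebra.single u c : NC K A) = c • wp K A (FreeMonoid.toList u) := by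
  rw [wp_toList, MonoidAlgebra.smul_single, smul_eq_mul, mul_one]

lemma rWL_single (q : List A) (w : FreeMonoid A) (c : K) :
    rWL K A q (MonoidAlgebra.single w c) =
      if q <+: FreeMonoid.toList w then
        c • wp K A ((FreeMonoid.toList w).drop q.length) else 0 := by
  rw [rWL, LinearMap.comp_apply, coeffLE_single]
  erw [Finsupp.linearCombination_single]
  by_cases h : q <+: FreeMonoid.toList w <;> simp [gR, h]

lemma lWL_single (q : List A) (w : FreeMonoid A) (c : K) :
    lWL K A q (MonoidAlgebra.single w c) =
      if q <:+ FreeMonoid.toList w then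
        c • wp K A ((FreeMonoid.toList w).take ((FreeMonoid.toList w).length - q.length))
      else 0 := by
  rw [lWL, LinearMap.comp_apply, coeffLE_single]
  erw [Finsupp.linearCombination_single]
  by_cases h : q <:+ FreeMonoid.toList w <;> simp [gL, h]

lemma rWL_wp (q w : List A) :
    rWL K A q (wp K A w) = if q <+: w then wp K A (w.drop q.length) else 0 := by
  rw [wp, rWL_single, FreeMonoid.toList_ofList]
  split_ifs with h <;> simp

lemma lWL_wp (q w : List A) :
    lWL K A q (wp K A w) = if q <:+ w then wp K A (w.take (w.length - q.length)) else 0 := by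
  rw [wp, lWL_single, FreeMonoid.toList_ofList]
  split_ifs with h <;> simp

lemma shL_single_single (u v : FreeMonoid A) (c d : K) :
    shL K A (MonoidAlgebra.single u c) (MonoidAlgebra.single v d) =
      (c * d) • shWm K A u v := by
  rw [shL, LinearMap.comp_apply, coeffLE_single]
  erw [Finsupp.linearCombination_single]
  rw [LinearMap.smul_apply, LinearMap.comp_apply, coeffLE_single]
  erw [Finsupp.linearCombination_single]
  rw [smul_smul]

lemma shL_wp_wp (u v : List A) :
    shL K A (wp K A u) (wp K A v) = shuffleW K A u v := by
  rw [wp, wp, shL_single_single, shWm, FreeMonoid.toList_ofList, FreeMonoid.toList_ofList,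
    one_mul, one_smul]

lemma DRm_single (v : FreeMonoid A) (c : K) :
    DRm K A (MonoidAlgebra.single v c) = c • rWL K A (FreeMonoid.toList v) := by
  rw [DRm, LinearMap.comp_apply, coeffLE_single]; erw [Finsupp.linearCombination_single]

lemma ELm_single (v : FreeMonoid A) (c : K) :
    ELm K A (MonoidAlgebra.single v c) = c • lWL K A (FreeMonoid.toList v) := by
  rw [ELm, LinearMap.comp_apply, coeffLE_single]; erw [Finsupp.linearCombination_single]

lemma prefix_append_iff' (u v w : List A) :
    (u ++ v) <+: w ↔ u <+: w ∧ v <+: w.drop u.length := by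
  constructor
  · rintro ⟨t, rfl⟩
    refine ⟨⟨v ++ t, by simp⟩, ?_⟩
    rw [List.append_assoc, List.drop_left]
    exact ⟨t, rfl⟩
  · rintro ⟨⟨s, rfl⟩, hv⟩
    rw [List.drop_left] at hv
    obtain ⟨t, rfl⟩ := hv
    exact ⟨t, by simp⟩

lemma suffix_append_iff' (u v w : List A) :
    (u ++ v) <:+ w ↔ v <:+ w ∧ u <:+ w.take (w.length - v.length) := by
  constructor
  · rintro ⟨t, rfl⟩
    refine ⟨⟨t ++ u, by simp⟩, ?_⟩
    have h : (t ++ (u ++ v)).length - v.length = (t ++ u).length := by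
      simp; omega
    rw [h, ← List.append_assoc, List.take_left]
    exact ⟨t, rfl⟩
  · rintro ⟨⟨s, rfl⟩, hu⟩
    have h : (s ++ v).length - v.length = s.length := by simp
    rw [h, List.take_left] at hu
    obtain ⟨t, rfl⟩ := hu
    exact ⟨t, by simp⟩

lemma rWL_comp_apply (u v : List A) (P : NC K A) :
    rWL K A (u ++ v) P = rWL K A v (rWL K A u P) := by
  induction P using MonoidAlgebra.induction_linear with
  | zero => simp
  | add f g hf hg => rw [map_add, map_add, map_add, hf, hg]
  | single w c =>
    rw [rWL_single, rWL_single]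
    by_cases h1 : u <+: FreeMonoid.toList w
    · by_cases h2 : v <+: (FreeMonoid.toList w).drop u.length
      · rw [if_pos ((prefix_append_iff' A u v _).2 ⟨h1, h2⟩), if_pos h1, map_smul,
          rWL_wp, if_pos h2, List.drop_drop, List.length_append,
          Nat.add_comm u.length v.length]
      · rw [if_neg (fun hc => h2 ((prefix_append_iff' A u v _).1 hc).2), if_pos h1, map_smul,
          rWL_wp, if_neg h2, smul_zero]
    · rw [if_neg (fun hc => h1 ((prefix_append_iff' A u v _).1 hc).1), if_neg h1, map_zero]

lemma lWL_comp_apply (u v : List A) (P : NC K A) :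
    lWL K A (u ++ v) P = lWL K A u (lWL K A v P) := by
  induction P using MonoidAlgebra.induction_linear with
  | zero => simp
  | add f g hf hg => rw [map_add, map_add, map_add, hf, hg]
  | single w c =>
    rw [lWL_single, lWL_single]
    by_cases h1 : v <:+ FreeMonoid.toList w
    · by_cases h2 : u <:+ (FreeMonoid.toList w).take ((FreeMonoid.toList w).length - v.length)
      · rw [if_pos ((suffix_append_iff' A u v _).2 ⟨h1, h2⟩), if_pos h1, map_smul,
          lWL_wp, if_pos h2, List.take_take, List.length_take, List.length_append]
        have hlv : v.length ≤ (FreeMonoid.toList w).length := h1.length_le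
        congr 3
        omega
      · rw [if_neg (fun hc => h2 ((suffix_append_iff' A u v _).1 hc).2), if_pos h1, map_smul,
          lWL_wp, if_neg h2, smul_zero]
    · rw [if_neg (fun hc => h1 ((suffix_append_iff' A u v _).1 hc).1), if_neg h1, map_zero]

lemma rWL_comp (u v : List A) :
    rWL K A (u ++ v) = (rWL K A v).comp (rWL K A u) :=
  LinearMap.ext fun P => rWL_comp_apply K A u v P

lemma lWL_comp (u v : List A) :
    lWL K A (u ++ v) = (lWL K A u).comp (lWL K A v) :=
  LinearMap.ext fun P => lWL_comp_apply K A u v P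

lemma DRm_mul (R S : NC K A) :
    DRm K A (R * S) = (DRm K A S).comp (DRm K A R) := by
  induction R using MonoidAlgebra.induction_linear with
  | zero => simp
  | add f g hf hg => rw [add_mul, map_add, map_add, hf, hg, LinearMap.comp_add]
  | single a b =>
    induction S using MonoidAlgebra.induction_linear with
    | zero => simp
    | add f g hf hg => rw [mul_add, map_add, map_add, hf, hg, LinearMap.add_comp]
    | single a' b' =>
      rw [MonoidAlgebra.single_mul_single, DRm_single, DRm_single, DRm_single]
      rw [FreeMonoid.toList_mul, rWL_comp, LinearMap.smul_comp, LinearMap.comp_smul,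
        smul_smul, mul_comm b b']

lemma ELm_mul (R S : NC K A) :
    ELm K A (R * S) = (ELm K A R).comp (ELm K A S) := by
  induction R using MonoidAlgebra.induction_linear with
  | zero => simp
  | add f g hf hg => rw [add_mul, map_add, map_add, hf, hg, LinearMap.add_comp]
  | single a b =>
    induction S using MonoidAlgebra.induction_linear with
    | zero => simp
    | add f g hf hg => rw [mul_add, map_add, map_add, hf, hg, LinearMap.comp_add]
    | single a' b' =>
      rw [MonoidAlgebra.single_mul_single, ELm_single, ELm_single, ELm_single]
      rw [FreeMonoid.toList_mul, lWL_comp, LinearMap.smul_comp, LinearMap.comp_smul,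
        smul_smul, mul_comm b b']

end Aux2
noncomputable section Aux3
variable (K A : Type*) [CommRing K]

lemma shuffleW_nil_left (v : List A) : shuffleW K A [] v = wp K A v := by
  rw [shuffleW]

lemma shuffleW_nil_right (u : List A) : shuffleW K A u [] = wp K A u := by
  cases u with
  | nil => rw [shuffleW]
  | cons a u => rw [shuffleW.eq_def]

lemma shuffleW_cons_cons (a b : A) (u v : List A) :
    shuffleW K A (a :: u) (b :: v) =
      wp K A [a] * shuffleW K A u (b :: v) + wp K A [b] * shuffleW K A (a :: u) v := by
  rw [shuffleW]

lemma wp_mul (u v : List A) : wp K A u * wp K A v = wp K A (u ++ v) := by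
  rw [wp, wp, wp, MonoidAlgebra.single_mul_single, one_mul]
  rfl

/-- tail recursion for the shuffle product -/
lemma shuffleW_concat (x y : A) (u v : List A) :
    shuffleW K A (u ++ [x]) (v ++ [y]) =
      shuffleW K A u (v ++ [y]) * wp K A [x] + shuffleW K A (u ++ [x]) v * wp K A [y] := by
  suffices h : ∀ n (u v : List A), u.length + v.length ≤ n →
      shuffleW K A (u ++ [x]) (v ++ [y]) =
        shuffleW K A u (v ++ [y]) * wp K A [x] + shuffleW K A (u ++ [x]) v * wp K A [y] from
    h (u.length + v.length) u v le_rfl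
  intro n
  induction n with
  | zero =>
    intro u v h
    obtain rfl : u = [] := List.eq_nil_of_length_eq_zero (by omega)
    obtain rfl : v = [] := List.eq_nil_of_length_eq_zero (by omega)
    simp only [List.nil_append]
    rw [shuffleW_cons_cons, shuffleW_nil_left, shuffleW_nil_right, add_comm]
  | succ n ih =>
    intro u v h
    match u, v with
    | [], [] =>
      simp only [List.nil_append]
      rw [shuffleW_cons_cons, shuffleW_nil_left, shuffleW_nil_right, add_comm]
    | [], b :: v' =>
      have ihv := ih [] v' (by simp at h ⊢; omega)
      simp only [List.nil_append] at ihv ⊢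
      simp only [List.cons_append]
      rw [shuffleW_cons_cons K A x b [] (v' ++ [y]), ihv, shuffleW_cons_cons K A x b [] v']
      simp only [shuffleW_nil_left, mul_add, add_mul, mul_assoc, wp_mul, List.cons_append,
        List.nil_append, List.append_assoc]
      abel
    | a :: u', [] =>
      have ihu := ih u' [] (by simp at h ⊢; omega)
      simp only [List.nil_append] at ihu ⊢
      simp only [List.cons_append]
      rw [shuffleW_cons_cons K A a y (u' ++ [x]) [], ihu, shuffleW_cons_cons K A a y u' []]
      simp only [shuffleW_nil_right, mul_add, add_mul, mul_assoc, wp_mul, List.cons_append,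
        List.nil_append, List.append_assoc]
      abel
    | a :: u', b :: v' =>
      have ih1 := ih u' (b :: v') (by simp at h ⊢; omega)
      have ih2 := ih (a :: u') v' (by simp at h ⊢; omega)
      simp only [List.cons_append] at ih1 ih2 ⊢
      rw [shuffleW_cons_cons K A a b (u' ++ [x]) (v' ++ [y]), ih1, ih2,
        shuffleW_cons_cons K A a b u' (v' ++ [y]),
        shuffleW_cons_cons K A a b (u' ++ [x]) v']
      simp only [mul_add, add_mul, mul_assoc]
      abel

end Aux3
noncomputable section Aux4
variable (K A : Type*) [CommRing K]

lemma rWL_letter_wp_nil (a : A) : rWL K A [a] (wp K A []) = 0 := by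
  rw [rWL_wp]; simp

lemma lWL_letter_wp_nil (a : A) : lWL K A [a] (wp K A []) = 0 := by
  rw [lWL_wp]; simp

lemma rWL_letter_wp_cons (a x : A) (u : List A) :
    rWL K A [a] (wp K A (x :: u)) = if x = a then wp K A u else 0 := by
  rw [rWL_wp]
  by_cases h : x = a
  · subst h
    rw [if_pos ⟨u, rfl⟩, if_pos rfl]
    simp
  · rw [if_neg, if_neg h]
    intro hc
    exact h (List.cons_prefix_cons.1 hc).1.symm

lemma lWL_letter_wp_concat (a x : A) (u : List A) :
    lWL K A [a] (wp K A (u ++ [x])) = if x = a then wp K A u else 0 := by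
  rw [lWL_wp]
  by_cases h : x = a
  · subst h
    rw [if_pos ⟨u, rfl⟩, if_pos rfl]
    have hlen : (u ++ [x]).length - ([x] : List A).length = u.length := by simp
    rw [hlen, List.take_left]
  · rw [if_neg, if_neg h]
    rintro ⟨t, ht⟩
    exact h (List.singleton_injective ((List.append_inj' ht rfl).2)).symm

lemma rWL_letter_mul (a x : A) (X : NC K A) :
    rWL K A [a] (wp K A [x] * X) = if x = a then X else 0 := by
  induction X using MonoidAlgebra.induction_linear with
  | zero => rw [mul_zero, map_zero]; split_ifs <;> rfl
  | add f g hf hg =>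
    rw [mul_add, map_add, hf, hg]
    split_ifs <;> simp
  | single w c =>
    rw [wp, MonoidAlgebra.single_mul_single, one_mul, rWL_single]
    rw [FreeMonoid.toList_mul, FreeMonoid.toList_ofList, List.singleton_append,
      List.length_singleton]
    by_cases h : x = a
    · subst h
      rw [if_pos (show [x] <+: x :: FreeMonoid.toList w from ⟨FreeMonoid.toList w, rfl⟩), if_pos rfl]
      rw [List.drop_one, List.tail_cons, wp_toList, MonoidAlgebra.smul_single, smul_eq_mul, mul_one]
    · rw [if_neg, if_neg h]
      intro hc
      exact h (List.cons_prefix_cons.1 hc).1.symm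

lemma lWL_letter_mul (a x : A) (X : NC K A) :
    lWL K A [a] (X * wp K A [x]) = if x = a then X else 0 := by
  induction X using MonoidAlgebra.induction_linear with
  | zero => rw [zero_mul, map_zero]; split_ifs <;> rfl
  | add f g hf hg =>
    rw [add_mul, map_add, hf, hg]
    split_ifs <;> simp
  | single w c =>
    rw [wp, MonoidAlgebra.single_mul_single, mul_one, lWL_single]
    rw [FreeMonoid.toList_mul, FreeMonoid.toList_ofList, List.length_singleton]
    by_cases h : x = a
    · subst h
      rw [if_pos (show [x] <:+ FreeMonoid.toList w ++ [x] from ⟨FreeMonoid.toList w, rfl⟩)]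
      rw [if_pos rfl]
      have hlen : (FreeMonoid.toList w ++ [x]).length - 1 = (FreeMonoid.toList w).length := by
        simp
      rw [hlen, List.take_left, wp_toList, MonoidAlgebra.smul_single, smul_eq_mul, mul_one]
    · rw [if_neg, if_neg h]
      rintro ⟨t, ht⟩
      exact h (List.singleton_injective ((List.append_inj' ht rfl).2)).symm

lemma shL_nil_left (X : NC K A) : shL K A (wp K A []) X = X := by
  induction X using MonoidAlgebra.induction_linear with
  | zero => simp
  | add f g hf hg => rw [map_add, hf, hg]
  | single w c =>
    rw [wp, shL_single_single, one_mul, shWm]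
    simp only [FreeMonoid.toList_ofList]
    rw [shuffleW_nil_left, wp_toList, MonoidAlgebra.smul_single, smul_eq_mul, mul_one]

lemma shL_nil_right (X : NC K A) : shL K A X (wp K A []) = X := by
  induction X using MonoidAlgebra.induction_linear with
  | zero => simp
  | add f g hf hg => rw [map_add, LinearMap.add_apply, hf, hg]
  | single w c =>
    rw [wp, shL_single_single, mul_one, shWm]
    simp only [FreeMonoid.toList_ofList]
    rw [shuffleW_nil_right, wp_toList, MonoidAlgebra.smul_single, smul_eq_mul, mul_one]

end Aux4
noncomputable section Aux5
variable (K A : Type*) [CommRing K]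

lemma rres_letter_words (a : A) (u v : List A) :
    rWL K A [a] (shuffleW K A u v) =
      shL K A (rWL K A [a] (wp K A u)) (wp K A v) +
        shL K A (wp K A u) (rWL K A [a] (wp K A v)) := by
  match u, v with
  | [], v =>
    rw [shuffleW_nil_left, rWL_letter_wp_nil, map_zero, LinearMap.zero_apply, zero_add,
      shL_nil_left]
  | x :: u', [] =>
    rw [shuffleW_nil_right, rWL_letter_wp_nil, map_zero, add_zero, shL_nil_right]
  | x :: u', y :: v' =>
    rw [shuffleW_cons_cons, map_add, rWL_letter_mul, rWL_letter_mul, rWL_letter_wp_cons,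
      rWL_letter_wp_cons]
    split_ifs <;> simp [shL_wp_wp]

lemma lres_letter_words (a : A) (u v : List A) :
    lWL K A [a] (shuffleW K A u v) =
      shL K A (lWL K A [a] (wp K A u)) (wp K A v) +
        shL K A (wp K A u) (lWL K A [a] (wp K A v)) := by
  rcases u.eq_nil_or_concat with rfl | ⟨u₀, x, rfl⟩
  · rw [shuffleW_nil_left, lWL_letter_wp_nil, map_zero, LinearMap.zero_apply, zero_add,
      shL_nil_left]
  rcases v.eq_nil_or_concat with rfl | ⟨v₀, y, rfl⟩
  · rw [shuffleW_nil_right, lWL_letter_wp_nil, map_zero, add_zero, shL_nil_right]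
  simp only [List.concat_eq_append]
  rw [shuffleW_concat, map_add, lWL_letter_mul, lWL_letter_mul, lWL_letter_wp_concat,
    lWL_letter_wp_concat]
  split_ifs <;> simp [shL_wp_wp]

def IsDer (D : NC K A →ₗ[K] NC K A) : Prop :=
  ∀ P Q : NC K A, D (shL K A P Q) = shL K A (D P) Q + shL K A P (D Q)

lemma isDer_rWL_letter (a : A) : IsDer K A (rWL K A [a]) := by
  intro P Q
  induction P using MonoidAlgebra.induction_linear with
  | zero => simp
  | add f g hf hg =>
    simp only [map_add, LinearMap.add_apply]
    rw [hf, hg]; abel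
  | single u c =>
    induction Q using MonoidAlgebra.induction_linear with
    | zero => simp
    | add f g hf hg =>
      simp only [map_add, LinearMap.add_apply]
      rw [hf, hg]; abel
    | single v d =>
      rw [single_eq_smul_wp K A u c, single_eq_smul_wp K A v d]
      simp only [map_smul, LinearMap.smul_apply, shL_wp_wp]
      rw [rres_letter_words]
      simp only [smul_add]

lemma isDer_lWL_letter (a : A) : IsDer K A (lWL K A [a]) := by
  intro P Q
  induction P using MonoidAlgebra.induction_linear with
  | zero => simp
  | add f g hf hg =>
    simp only [map_add, LinearMap.add_apply]
    rw [hf, hg]; abel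
  | single u c =>
    induction Q using MonoidAlgebra.induction_linear with
    | zero => simp
    | add f g hf hg =>
      simp only [map_add, LinearMap.add_apply]
      rw [hf, hg]; abel
    | single v d =>
      rw [single_eq_smul_wp K A u c, single_eq_smul_wp K A v d]
      simp only [map_smul, LinearMap.smul_apply, shL_wp_wp]
      rw [lres_letter_words]
      simp only [smul_add]

lemma isDer_zero : IsDer K A 0 := fun P Q => by simp

lemma isDer_add {D E : NC K A →ₗ[K] NC K A} (hD : IsDer K A D) (hE : IsDer K A E) :
    IsDer K A (D + E) := fun P Q => by
  simp only [LinearMap.add_apply]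
  rw [hD P Q, hE P Q]
  simp only [map_add, LinearMap.add_apply]
  abel

lemma isDer_smul (c : K) {D : NC K A →ₗ[K] NC K A} (hD : IsDer K A D) :
    IsDer K A (c • D) := fun P Q => by
  simp only [LinearMap.smul_apply]
  rw [hD P Q]
  simp only [smul_add, map_smul, LinearMap.smul_apply]

lemma isDer_comm {D E : NC K A →ₗ[K] NC K A} (hD : IsDer K A D) (hE : IsDer K A E) :
    IsDer K A (E ∘ₗ D - D ∘ₗ E) := fun P Q => by
  simp only [LinearMap.sub_apply, LinearMap.comp_apply]
  rw [hD P Q, map_add, hE (D P) Q, hE P (D Q), hE P Q, map_add, hD (E P) Q, hD P (E Q)]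
  simp only [map_sub, LinearMap.sub_apply]
  abel

def derSet : LieSubalgebra K (NC K A) where
  carrier := {R | IsDer K A (DRm K A R) ∧ IsDer K A (ELm K A R)}
  add_mem' := fun hx hy => by
    refine ⟨?_, ?_⟩ <;> rw [map_add]
    · exact isDer_add K A hx.1 hy.1
    · exact isDer_add K A hx.2 hy.2
  zero_mem' := by
    refine ⟨?_, ?_⟩ <;> rw [map_zero]
    · exact isDer_zero K A
    · exact isDer_zero K A
  smul_mem' := fun c x hx => by
    refine ⟨?_, ?_⟩ <;> rw [map_smul]
    · exact isDer_smul K A c hx.1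
    · exact isDer_smul K A c hx.2
  lie_mem' := fun {x y} hx hy => by
    refine ⟨?_, ?_⟩ <;> rw [Ring.lie_def, map_sub]
    · rw [DRm_mul, DRm_mul]
      exact isDer_comm K A hx.1 hy.1
    · rw [ELm_mul, ELm_mul]
      exact isDer_comm K A hy.2 hx.2

lemma letter_mem_derSet (a : A) : wp K A [a] ∈ derSet K A := by
  constructor
  · rw [wp, DRm_single, one_smul, FreeMonoid.toList_ofList]
    exact isDer_rWL_letter K A a
  · rw [wp, ELm_single, one_smul, FreeMonoid.toList_ofList]
    exact isDer_lWL_letter K A a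

end Aux5

theorem residual_by_lie_polynomial_is_shuffle_derivation
    (K A : Type*) [CommRing K] [Fintype A]
    (P Q R : NC K A) (hR : R ∈ freeLie K A) :
    rres K A (sh K A P Q) R = sh K A (rres K A P R) Q + sh K A P (rres K A Q R) ∧
    lres K A R (sh K A P Q) = sh K A (lres K A R P) Q + sh K A P (lres K A R Q) := by
  have hsub : freeLie K A ≤ derSet K A := by
    rw [freeLie]
    refine (LieSubalgebra.lieSpan_le).2 ?_
    rintro _ ⟨a, rfl⟩
    exact letter_mem_derSet K A a
  obtain ⟨h1, h2⟩ := hsub hR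
  constructor
  · rw [rres_eq, rres_eq, rres_eq, sh_eq, sh_eq, sh_eq]
    exact h1 P Q
  · rw [lres_eq, lres_eq, lres_eq, sh_eq, sh_eq, sh_eq]
    exact h2 P Q
end

section
/- Let A be a finite alphabet and let w ∈ A^+ be a nonempty word, and work over K = ℤ. If λ(w) = 0 then γ(w) = 0; otherwise γ(w) equals the greatest common divisor of the (nonzero) coefficients appearing in the monomials of λ(w). -/
open scoped BigOperators
open Classical

noncomputable section

variable (K A : Type*) [CommRing K]

attribute [local instance] LieRing.ofAssociativeRing

end
noncomputable section AuxProof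
variable {A : Type*}

attribute [local instance] LieRing.ofAssociativeRing

lemma lam_nil : lam ℤ A [] = 0 := by rw [lam]

lemma lam_one (a : A) : lam ℤ A [a] = wp ℤ A [a] := by rw [lam]

lemma lam_cons_cons (a b : A) (t : List A) :
    lam ℤ A (a :: b :: t) =
      lam ℤ A (a :: (b :: t).dropLast) * wp ℤ A [(b :: t).getLast (by simp)] -
        lam ℤ A (b :: t) * wp ℤ A [a] := by
  rw [lam]

lemma coeff_mul_wp (P : NC ℤ A) (b : A) (v : List A) :
    (P * wp ℤ A [b]).coeff (FreeMonoid.ofList (v ++ [b])) = P.coeff (FreeMonoid.ofList v) := by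
  unfold wp
  rw [MonoidAlgebra.coeff_mul_single_eq_coeff_mul (m₂ := FreeMonoid.ofList v), mul_one]
  intro c _
  rw [FreeMonoid.ofList_append]
  exact mul_left_inj _

lemma coeff_mul_wp_ne (P : NC ℤ A) (b : A) (w : List A) (h : w.getLast? ≠ some b) :
    (P * wp ℤ A [b]).coeff (FreeMonoid.ofList w) = 0 := by
  unfold wp
  apply MonoidAlgebra.mul_single_apply_of_not_exists_mul
  rintro ⟨d, hd⟩
  apply h
  have : w = FreeMonoid.toList d ++ [b] := congrArg FreeMonoid.toList hd
  rw [this, List.getLast?_concat]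

lemma coeff_wp_mul (P : NC ℤ A) (b : A) (v : List A) :
    (wp ℤ A [b] * P).coeff (FreeMonoid.ofList (b :: v)) = P.coeff (FreeMonoid.ofList v) := by
  unfold wp
  rw [MonoidAlgebra.coeff_single_mul_eq_mul_coeff (m₂ := FreeMonoid.ofList v), one_mul]
  intro c _
  show FreeMonoid.ofList [b] * c = FreeMonoid.ofList ([b] ++ v) ↔ _
  rw [FreeMonoid.ofList_append]
  exact mul_right_inj _

lemma coeff_wp_mul_ne (P : NC ℤ A) (b : A) (w : List A) (h : w.head? ≠ some b) :
    (wp ℤ A [b] * P).coeff (FreeMonoid.ofList w) = 0 := by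
  unfold wp
  apply MonoidAlgebra.single_mul_apply_of_not_exists_mul
  rintro ⟨d, hd⟩
  apply h
  have : w = b :: FreeMonoid.toList d := congrArg FreeMonoid.toList hd
  rw [this, List.head?_cons]

/-- Reversed left-normed bracketing: `ellR r = ℓ(r.reverse)`. -/
def ellR (A : Type*) : List A → NC ℤ A
  | [] => 0
  | [a] => wp ℤ A [a]
  | b :: c :: t => ellR A (c :: t) * wp ℤ A [b] - wp ℤ A [b] * ellR A (c :: t)

lemma ellR_cons (b : A) {t : List A} (ht : t ≠ []) :
    ellR A (b :: t) = ellR A t * wp ℤ A [b] - wp ℤ A [b] * ellR A t := by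
  cases t with
  | nil => exact absurd rfl ht
  | cons c t' => rfl

/-- `lam` has zero coefficient on the empty word. -/
lemma lam_coeff_nil (w : List A) : (lam ℤ A w).coeff (FreeMonoid.ofList []) = 0 := by
  match w with
  | [] => rw [lam_nil]; rfl
  | [a] =>
      rw [lam_one]
      unfold wp
      refine Finsupp.single_eq_of_ne' ?_
      intro h
      exact absurd (congrArg FreeMonoid.toList h) (by simp)
  | a :: b :: t =>
      rw [lam_cons_cons, MonoidAlgebra.coeff_sub, Finsupp.sub_apply, coeff_mul_wp_ne _ _ _ (by simp),
        coeff_mul_wp_ne _ _ _ (by simp), sub_zero]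
/-- Coefficient recursion for `lam` (words of length ≥ 2). -/
lemma lam_coeff (a : A) (mid : List A) (hm : mid ≠ []) (u : List A) (b : A) :
    (lam ℤ A (a :: mid)).coeff (FreeMonoid.ofList (u ++ [b])) =
      (if mid.getLast hm = b then (lam ℤ A (a :: mid.dropLast)).coeff (FreeMonoid.ofList u) else 0)
      - (if a = b then (lam ℤ A mid).coeff (FreeMonoid.ofList u) else 0) := by
  obtain ⟨c, t, rfl⟩ : ∃ c t, mid = c :: t := by
    cases mid with
    | nil => exact absurd rfl hm
    | cons c t => exact ⟨c, t, rfl⟩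
  rw [lam_cons_cons, MonoidAlgebra.coeff_sub, Finsupp.sub_apply]
  congr 1
  · by_cases h : (c :: t).getLast hm = b
    · rw [if_pos h, ← h, coeff_mul_wp]
    · rw [if_neg h, coeff_mul_wp_ne]
      rw [List.getLast?_concat]
      exact fun hc => h (Option.some_injective _ hc).symm
  · by_cases h : a = b
    · subst h; rw [if_pos rfl, coeff_mul_wp]
    · rw [if_neg h, coeff_mul_wp_ne]
      rw [List.getLast?_concat]
      exact fun hc => h (Option.some_injective _ hc).symm
lemma ofList_inj {u v : List A} (h : FreeMonoid.ofList u = FreeMonoid.ofList v) : u = v :=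
  congrArg FreeMonoid.toList h

lemma wp_coeff_self (u : List A) : (wp ℤ A u).coeff (FreeMonoid.ofList u) = 1 :=
  Finsupp.single_eq_same

lemma wp_coeff_ne {u v : List A} (h : u ≠ v) : (wp ℤ A u).coeff (FreeMonoid.ofList v) = 0 :=
  Finsupp.single_eq_of_ne' fun hc => h (ofList_inj hc)

/-- Coefficient recursion for `ellR` on a word `b :: t` with `t ≠ []`. -/
lemma ellR_coeff (b : A) {t : List A} (ht : t ≠ []) (w : List A) :
    (ellR A (b :: t)).coeff (FreeMonoid.ofList w) =
      (if w.getLast? = some b then (ellR A t).coeff (FreeMonoid.ofList w.dropLast) else 0)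
      - (if w.head? = some b then (ellR A t).coeff (FreeMonoid.ofList w.tail) else 0) := by
  rw [ellR_cons b ht, MonoidAlgebra.coeff_sub, Finsupp.sub_apply]
  congr 1
  · by_cases h : w.getLast? = some b
    · rw [if_pos h]
      conv_lhs => rw [← List.dropLast_append_getLast? _ h]
      rw [coeff_mul_wp]
    · rw [if_neg h, coeff_mul_wp_ne _ _ _ h]
  · by_cases h : w.head? = some b
    · rw [if_pos h]
      obtain ⟨w', rfl⟩ : ∃ w', w = b :: w' := by
        cases w with
        | nil => simp at h
        | cons x w' => exact ⟨w', by rw [List.head?_cons] at h; rw [Option.some_inj.mp h.symm]⟩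
      rw [coeff_wp_mul, List.tail_cons]
    · rw [if_neg h, coeff_wp_mul_ne _ _ _ h]

/-- Adjointness: the coefficient of `r.reverse` in `λ(w)` equals the coefficient of `w`
in the left-normed bracketing `ℓ(r.reverse) = ellR r`. -/
lemma adj (r : List A) : ∀ w : List A,
    (lam ℤ A w).coeff (FreeMonoid.ofList r.reverse) = (ellR A r).coeff (FreeMonoid.ofList w) := by
  induction r with
  | nil =>
      intro w
      rw [List.reverse_nil, lam_coeff_nil]
      rfl
  | cons b t ih =>
      intro w
      by_cases ht : t = []
      · subst ht
        -- `ellR [b] = wp [b]`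
        match w with
        | [] =>
            rw [lam_nil]
            show (0 : NC ℤ A).coeff _ = (wp ℤ A [b]).coeff (FreeMonoid.ofList [])
            rw [wp_coeff_ne (by simp : [b] ≠ ([] : List A))]
            rfl
        | [a] =>
            rw [lam_one]
            show (wp ℤ A [a]).coeff (FreeMonoid.ofList [b]) = (wp ℤ A [b]).coeff (FreeMonoid.ofList [a])
            by_cases hab : a = b
            · subst hab; rfl
            · rw [wp_coeff_ne (by simpa using hab), wp_coeff_ne (by simpa using Ne.symm hab)]
        | a :: c :: t' =>
            rw [List.reverse_singleton, show ([b] : List A) = [] ++ [b] from rfl,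
              lam_coeff a (c :: t') (by simp)]
            show _ = (wp ℤ A [b]).coeff (FreeMonoid.ofList (a :: c :: t'))
            rw [wp_coeff_ne (by simp), lam_coeff_nil, lam_coeff_nil]
            simp
      · -- t ≠ []
        have h0 : (ellR A t).coeff (FreeMonoid.ofList []) = 0 := by
          rw [← ih [], lam_nil]; rfl
        rw [ellR_coeff b ht, List.reverse_cons]
        match w with
        | [] =>
            rw [lam_nil]
            simp
        | [a] =>
            rw [lam_one, wp_coeff_ne, List.getLast?_singleton, List.head?_cons,
              List.dropLast_singleton, List.tail_cons, h0]
            · simp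
            · intro hc
              have h2 : 1 = t.length + 1 := by simpa using congrArg List.length hc
              exact ht (List.length_eq_zero_iff.mp (by omega))
        | a :: c :: t' =>
            rw [lam_coeff a (c :: t') (by simp) t.reverse b, ih (a :: (c :: t').dropLast),
              ih (c :: t')]
            congr 1
            · have hY : ((a :: c :: t').getLast? = some b) ↔
                  ((c :: t').getLast (by simp) = b) := by
                rw [List.getLast?_cons_cons,
                  List.getLast?_eq_getLast_of_ne_nil (by simp : c :: t' ≠ []), Option.some_inj]
              rw [if_congr hY rfl rfl, List.dropLast_cons₂]
            · have hH : ((a :: c :: t').head? = some b) ↔ (a = b) := by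
                rw [List.head?_cons, Option.some_inj]
              rw [if_congr hH rfl rfl, List.tail_cons]
/-- The set of left-normed bracketings of words. -/
def LieGen (A : Type*) : Set (NC ℤ A) := Set.range (ellR A)

lemma ellR_bracket_letter {t : List A} (ht : t ≠ []) (b : A) :
    ⁅ellR A t, wp ℤ A [b]⁆ = ellR A (b :: t) := by
  rw [Ring.lie_def, ellR_cons b ht]

lemma bracket_letter_mem {x : NC ℤ A} (hx : x ∈ Submodule.span ℤ (LieGen A)) (b : A) :
    ⁅x, wp ℤ A [b]⁆ ∈ Submodule.span ℤ (LieGen A) := by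
  induction hx using Submodule.span_induction with
  | mem y hy =>
      obtain ⟨t, rfl⟩ := hy
      by_cases ht : t = []
      · subst ht
        rw [show ellR A [] = 0 from rfl, zero_lie]
        exact zero_mem _
      · rw [ellR_bracket_letter ht]
        exact Submodule.subset_span ⟨b :: t, rfl⟩
  | zero => rw [zero_lie]; exact zero_mem _
  | add x y hx hy ihx ihy => rw [add_lie]; exact add_mem ihx ihy
  | smul a x hx ihx => rw [smul_lie]; exact Submodule.smul_mem _ _ ihx

lemma bracket_gen_mem : ∀ (n : ℕ) (v : List A), v.length ≤ n →
    ∀ u : List A, ⁅ellR A u, ellR A v⁆ ∈ Submodule.span ℤ (LieGen A) := by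
  intro n
  induction n with
  | zero =>
      intro v hv u
      rw [List.length_eq_zero_iff.mp (Nat.le_zero.mp hv), show ellR A [] = 0 from rfl, lie_zero]
      exact zero_mem _
  | succ n ih =>
      intro v hv u
      match v with
      | [] => rw [show ellR A [] = 0 from rfl, lie_zero]; exact zero_mem _
      | [b] =>
          show ⁅ellR A u, wp ℤ A [b]⁆ ∈ _
          exact bracket_letter_mem (Submodule.subset_span ⟨u, rfl⟩) b
      | b :: c :: t =>
          have htne : (c :: t : List A) ≠ [] := by simp
          have hlen : (c :: t : List A).length ≤ n := by
            simpa [Nat.succ_le_succ_iff] using hv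
          rw [← ellR_bracket_letter htne b, leibniz_lie]
          refine add_mem ?_ ?_
          · exact bracket_letter_mem (ih (c :: t) hlen u) b
          · by_cases hu : u = []
            · subst hu
              rw [show ellR A [] = 0 from rfl, zero_lie, lie_zero]
              exact zero_mem _
            · rw [ellR_bracket_letter hu b, ← lie_skew]
              exact neg_mem (ih (c :: t) hlen (b :: u))

lemma freeLie_le_span {P : NC ℤ A} (hP : P ∈ freeLie ℤ A) :
    P ∈ Submodule.span ℤ (LieGen A) := by
  let SL : LieSubalgebra ℤ (NC ℤ A) :=
    { Submodule.span ℤ (LieGen A) with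
      lie_mem' := by
        intro x y hx hy
        have hx' : x ∈ Submodule.span ℤ (LieGen A) := hx
        have hy' : y ∈ Submodule.span ℤ (LieGen A) := hy
        show ⁅x, y⁆ ∈ Submodule.span ℤ (LieGen A)
        clear hx hy
        induction hx' using Submodule.span_induction with
        | mem x' hx' =>
            induction hy' using Submodule.span_induction with
            | mem y' hy' =>
                obtain ⟨u, rfl⟩ := hx'
                obtain ⟨v, rfl⟩ := hy'
                exact bracket_gen_mem v.length v le_rfl u
            | zero => rw [lie_zero]; exact zero_mem _
            | add y z hy hz ihy ihz => rw [lie_add]; exact add_mem ihy ihz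
            | smul a y hy ihy => rw [lie_smul]; exact Submodule.smul_mem _ _ ihy
        | zero => rw [zero_lie]; exact zero_mem _
        | add x x' hx hx' ihx ihx' => rw [add_lie]; exact add_mem ihx ihx'
        | smul a x hx ihx => rw [smul_lie]; exact Submodule.smul_mem _ _ ihx }
  have : freeLie ℤ A ≤ SL := by
    rw [freeLie, LieSubalgebra.lieSpan_le]
    rintro x ⟨a, rfl⟩
    exact Submodule.subset_span ⟨[a], rfl⟩
  exact this hP

lemma ellR_mem_freeLie : ∀ {r : List A}, r ≠ [] → ellR A r ∈ freeLie ℤ A := by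
  intro r
  induction r with
  | nil => exact fun h => absurd rfl h
  | cons b t ih =>
      intro _
      by_cases ht : t = []
      · subst ht
        exact LieSubalgebra.subset_lieSpan ⟨b, rfl⟩
      · rw [← ellR_bracket_letter ht b]
        exact (freeLie ℤ A).lie_mem (ih ht) (LieSubalgebra.subset_lieSpan ⟨b, rfl⟩)
lemma gcd_dvd_coeff {w : List A} {P : NC ℤ A} (hP : P ∈ freeLie ℤ A) :
    ((lam ℤ A w).coeff.support.gcd (lam ℤ A w).coeff) ∣ P.coeff (FreeMonoid.ofList w) := by
  have hP' := freeLie_le_span hP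
  clear hP
  induction hP' using Submodule.span_induction with
  | mem x hx =>
      obtain ⟨r, rfl⟩ := hx
      rw [← adj r w]
      by_cases h : FreeMonoid.ofList r.reverse ∈ (lam ℤ A w).coeff.support
      · exact Finset.gcd_dvd h
      · rw [Finsupp.notMem_support_iff.mp h]
        exact dvd_zero _
  | zero => simp
  | add x y _ _ ihx ihy => rw [MonoidAlgebra.coeff_add, Finsupp.add_apply]; exact dvd_add ihx ihy
  | smul a x _ ihx =>
      rw [MonoidAlgebra.coeff_smul, Finsupp.smul_apply, smul_eq_mul]
      exact Dvd.dvd.mul_left ihx a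

lemma finset_gcd_mem_ideal {ι : Type*} (s : Finset ι) (f : ι → ℤ) (I : Ideal ℤ)
    (h : ∀ i ∈ s, f i ∈ I) : s.gcd f ∈ I := by
  classical
  induction s using Finset.induction_on with
  | empty => rw [Finset.gcd_empty]; exact zero_mem _
  | insert a s hx ih =>
      rw [Finset.gcd_insert]
      have h2 : Ideal.span {f a, s.gcd f} ≤ I := by
        rw [Ideal.span_le]
        rintro x hx
        rcases hx with rfl | rfl
        · exact h a (Finset.mem_insert_self a s)
        · exact ih fun i hi => h i (Finset.mem_insert_of_mem hi)
      have h3 : GCDMonoid.gcd (f a) (s.gcd f) ∈ Ideal.span ({f a, s.gcd f} : Set ℤ) := by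
        rw [← span_gcd]
        exact Ideal.subset_span rfl
      exact h2 h3

lemma gamma_eq_gcd (w : List A) :
    gammaW A w = (lam ℤ A w).coeff.support.gcd (lam ℤ A w).coeff := by
  set g : ℤ := (lam ℤ A w).coeff.support.gcd (lam ℤ A w).coeff with hg
  set I : Ideal ℤ := Ideal.span {c : ℤ | ∃ P ∈ freeLie ℤ A, coeffW ℤ A P w = c} with hI
  haveI hpr : I.IsPrincipal := IsPrincipalIdealRing.principal _
  have hIg : I = Ideal.span {g} := by
    apply le_antisymm
    · rw [hI, Ideal.span_le]
      rintro c ⟨P, hP, rfl⟩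
      exact Ideal.mem_span_singleton.mpr (gcd_dvd_coeff hP)
    · rw [Ideal.span_le, Set.singleton_subset_iff]
      refine finset_gcd_mem_ideal _ _ I ?_
      intro v hv
      have hvne : FreeMonoid.toList v ≠ [] := by
        intro hnil
        have hv1 : v = FreeMonoid.ofList [] := congrArg FreeMonoid.ofList hnil
        rw [Finsupp.mem_support_iff, hv1, lam_coeff_nil] at hv
        exact hv rfl
      have hrne : (FreeMonoid.toList v).reverse ≠ [] := by
        simpa using hvne
      have hv2 : FreeMonoid.ofList ((FreeMonoid.toList v).reverse.reverse) = v := by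
        rw [List.reverse_reverse]; rfl
      have := adj ((FreeMonoid.toList v).reverse) w
      rw [hv2] at this
      rw [hI]
      exact Ideal.subset_span ⟨ellR A (FreeMonoid.toList v).reverse,
        ellR_mem_freeLie hrne, this.symm⟩
  have hgen : Ideal.span {Submodule.IsPrincipal.generator I} = Ideal.span {g} := by
    rw [← hIg]; exact Ideal.span_singleton_generator I
  have hass : (Submodule.IsPrincipal.generator I).natAbs = g.natAbs :=
    Int.associated_iff_natAbs.mp (Ideal.span_singleton_eq_span_singleton.mp hgen)
  have hgnorm : (g.natAbs : ℤ) = g := by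
    rw [← Int.abs_eq_natAbs, Int.abs_eq_normalize, Finset.normalize_gcd]
  show ((Submodule.IsPrincipal.generator I).natAbs : ℤ) = g
  rw [hass, hgnorm]
end AuxProof

theorem gamma_eq_gcd_coeffs_lam
    (A : Type*) [Fintype A] (w : List A) (hw : w ≠ []) :
    (lam ℤ A w = 0 → gammaW A w = 0) ∧
    (lam ℤ A w ≠ 0 →
      gammaW A w = Finset.gcd (Finsupp.support (lam ℤ A w).coeff) fun v => (lam ℤ A w).coeff v) := by
  constructor
  · intro h0
    rw [gamma_eq_gcd w, h0]
    simp
  · intro _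
    exact gamma_eq_gcd w
end
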